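/- Let R be an F-pure Noetherian ring of characteristic p, I₁,…,I_t ideals, J an ideal with I₁,…,I_t ⊆ √J. Then the sequence e ↦ |Ṽ(p^e)|/p^{et} is monotone increasing, where Ṽ(p^e) = {a ∈ ℕ_{>0}^t : I₁^{a₁}⋯I_t^{a_t} ⊄ J^{[p^e]}}. -/

import Mathlib

open Ideal Filter MeasureTheory

/-- The `q`-th Frobenius power of an ideal: the ideal generated by `q`-th powers of its
elements (used with `q = p ^ e`). -/
def Ideal.frobPow {R : Type*} [CommRing R] (J : Ideal R) (q : ℕ) : Ideal R :=
  Ideal.span ((fun a => a ^ q) '' (J : Set R))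

/-- The set `V` of exponent vectors `a ∈ ℕ^t` with `I₁^{a₁} ⋯ I_t^{a_t} ⊄ J'`. -/
def Vnu {R : Type*} [CommRing R] {t : ℕ} (I : Fin t → Ideal R) (J' : Ideal R) :
    Set (Fin t → ℕ) :=
  {a | ¬ (∏ i, I i ^ a i) ≤ J'}

universe u v

/-- A ring homomorphism `f : R → S` is pure if for every `R`-module `M`, the natural map
`M → M ⊗_R S` (with `S` viewed as an `R`-module via `f`) is injective. -/
def RingHom.IsPureHom {R : Type u} {S : Type v} [CommRing R] [CommRing S]
    (f : R →+* S) : Prop :=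
  ∀ (M : Type (max u v)) [AddCommGroup M] [Module R M],
    letI : Module R S := Module.compHom S f
    Function.Injective (fun m : M => (TensorProduct.tmul R m (1 : S) : TensorProduct R M S))

/-- `R` is F-pure if the Frobenius endomorphism is a pure ring homomorphism. -/
def IsFPure (p : ℕ) (R : Type u) [CommRing R] [Fact p.Prime] [CharP R p] : Prop :=
  RingHom.IsPureHom (frobenius R p)

/-- The region `B^{J'}(I; q) = ⋃_{a ∈ V} ∏ᵢ [0, aᵢ/q] ⊆ ℝ^t`. -/
def Breg {R : Type*} [CommRing R] {t : ℕ} (I : Fin t → Ideal R) (J' : Ideal R) (q : ℕ) :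
    Set (Fin t → ℝ) :=
  ⋃ a ∈ Vnu I J', Set.univ.pi fun i => Set.Icc (0 : ℝ) ((a i : ℝ) / (q : ℝ))

/-- The variant `Ṽ` of `V` using strictly positive exponents. -/
def VnuPos {R : Type*} [CommRing R] {t : ℕ} (I : Fin t → Ideal R) (J' : Ideal R) :
    Set (Fin t → ℕ) :=
  {a | (∀ i, 0 < a i) ∧ ¬ (∏ i, I i ^ a i) ≤ J'}

lemma pow_mem_frobPow {R : Type*} [CommRing R] {J : Ideal R} {x : R} (hx : x ∈ J) (q : ℕ) :
    x ^ q ∈ J.frobPow q :=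
  Ideal.subset_span ⟨x, hx, rfl⟩

lemma frobPow_succ_le {R : Type*} [CommRing R] (J : Ideal R) (p e : ℕ) :
    J.frobPow (p ^ (e + 1)) ≤ (J.frobPow (p ^ e)).frobPow p := by
  rw [Ideal.frobPow, Ideal.span_le]
  rintro _ ⟨y, hy, rfl⟩
  show y ^ p ^ (e + 1) ∈ ((J.frobPow (p ^ e)).frobPow p : Set R)
  have h1 : y ^ p ^ (e + 1) = (y ^ p ^ e) ^ p := by rw [← pow_mul, pow_succ]
  rw [h1]
  exact pow_mem_frobPow (pow_mem_frobPow hy _) p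

lemma pure_aux {R : Type u} {S : Type v} [CommRing R] [CommRing S] (f : R →+* S)
    (B : Ideal R) (x : R)
    (hpure :
      letI : Module R S := Module.compHom S f
      Function.Injective
        (fun m : R ⧸ B => (TensorProduct.tmul R m (1 : S) : TensorProduct R (R ⧸ B) S)))
    (hx : f x ∈ Ideal.span (⇑f '' (B : Set R))) : x ∈ B := by
  letI : Module R S := Module.compHom S f
  have hsmul : ∀ (r : R) (s : S), r • s = f r * s := fun r s => rfl
  have hmem : f x ∈ (B • (⊤ : Submodule R S)) := by
    refine Submodule.span_induction ?_ ?_ ?_ ?_ hx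
    · rintro _ ⟨b, hb, rfl⟩
      have hb1 : f b = b • (1 : S) := by rw [hsmul, mul_one]
      rw [hb1]
      exact Submodule.smul_mem_smul hb Submodule.mem_top
    · exact Submodule.zero_mem _
    · intro y z _ _ hy hz; exact Submodule.add_mem _ hy hz
    · intro s y _ hy
      rw [smul_eq_mul]
      refine Submodule.smul_induction_on hy ?_ ?_
      · intro b hb n _
        have : s * (b • n) = b • (s * n) := by rw [hsmul, hsmul]; ring
        rw [this]
        exact Submodule.smul_mem_smul hb Submodule.mem_top
      · intro y₁ y₂ h1 h2
        rw [mul_add]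
        exact Submodule.add_mem _ h1 h2
  have h0 : (TensorProduct.tmul R (Ideal.Quotient.mk B x) (1 : S) :
      TensorProduct R (R ⧸ B) S) = 0 := by
    apply (TensorProduct.quotTensorEquivQuotSMul S B).injective
    rw [(TensorProduct.quotTensorEquivQuotSMul S B).map_zero,
      TensorProduct.quotTensorEquivQuotSMul_mk_tmul,
      Submodule.Quotient.mk_eq_zero, hsmul, mul_one]
    exact hmem
  have hinj := hpure (a₁ := Ideal.Quotient.mk B x) (a₂ := 0)
    (by simpa [TensorProduct.zero_tmul] using h0)
  rwa [Ideal.Quotient.eq_zero_iff_mem] at hinj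

lemma fpure_key {R : Type u} [CommRing R] {p : ℕ} [Fact p.Prime] [CharP R p]
    (hFP : IsFPure p R) (B : Ideal R) {x : R} (hx : x ^ p ∈ B.frobPow p) : x ∈ B := by
  refine pure_aux (frobenius R p) B x (hFP (R ⧸ B)) ?_
  have himg : ⇑(frobenius R p) '' (B : Set R) = (fun a => a ^ p) '' (B : Set R) :=
    Set.image_congr fun a _ => frobenius_def p a
  rw [himg]
  show x ^ p ∈ B.frobPow p
  exact hx

lemma prod_ideal_mono {R : Type*} [CommRing R] {ι : Type*} (s : Finset ι)
    (f g : ι → Ideal R) (h : ∀ i ∈ s, f i ≤ g i) : s.prod f ≤ s.prod g := by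
  classical
  induction s using Finset.induction_on with
  | empty => simp
  | insert _ _ hx ih =>
      rw [Finset.prod_insert hx, Finset.prod_insert hx]
      exact Ideal.mul_mono (h _ (Finset.mem_insert_self _ _))
        (ih fun i hi => h i (Finset.mem_insert_of_mem hi))

lemma key_step {R : Type u} [CommRing R] {p : ℕ} [Fact p.Prime] [CharP R p]
    (hFP : IsFPure p R) {t : ℕ} (I : Fin t → Ideal R) (J : Ideal R) (e : ℕ)
    {a c : Fin t → ℕ} (ha : a ∈ VnuPos I (J.frobPow (p ^ e)))
    (hc : ∀ i, 0 < c i) (hcle : ∀ i, c i ≤ p * a i) :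
    c ∈ VnuPos I (J.frobPow (p ^ (e + 1))) := by
  obtain ⟨hapos, hnle⟩ := ha
  obtain ⟨x, hxA, hxJ⟩ := SetLike.not_le_iff_exists.mp hnle
  refine ⟨hc, fun hle => hxJ ?_⟩
  apply fpure_key hFP
  apply frobPow_succ_le J p e
  apply hle
  have hx1 : x ^ p ∈ ∏ i, I i ^ (a i * p) := by
    have h2 : (∏ i, I i ^ (a i * p)) = (∏ i, I i ^ a i) ^ p := by
      rw [← Finset.prod_pow]
      exact Finset.prod_congr rfl fun i _ => by rw [pow_mul]
    rw [h2]
    exact Ideal.pow_mem_pow hxA p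
  have hmono : (∏ i, I i ^ (a i * p)) ≤ ∏ i, I i ^ c i := by
    refine prod_ideal_mono _ _ _ fun i _ => ?_
    exact Ideal.pow_le_pow_right (by rw [Nat.mul_comm]; exact hcle i)
  exact hmono hx1

lemma vnupos_finite {R : Type u} [CommRing R] [IsNoetherianRing R] {t : ℕ}
    (I : Fin t → Ideal R) (J : Ideal R) (hrad : ∀ i, I i ≤ J.radical) {q : ℕ} (hq : 0 < q) :
    (VnuPos I (J.frobPow q)).Finite := by
  have hk : ∀ i, ∃ k, I i ^ k ≤ J.frobPow q := by
    intro i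
    refine Ideal.exists_pow_le_of_le_radical_of_fg ?_ (IsNoetherian.noetherian _)
    intro x hx
    have hx' := hrad i hx
    rw [Ideal.mem_radical_iff] at hx' ⊢
    obtain ⟨n, hn⟩ := hx'
    exact ⟨n * q, by rw [pow_mul]; exact pow_mem_frobPow hn q⟩
  choose k hk using hk
  apply Set.Finite.subset (Set.Finite.pi (fun i => Set.finite_Iio (k i)))
  intro a ha
  simp only [Set.mem_pi, Set.mem_univ, Set.mem_Iio, forall_true_left]
  intro i
  by_contra hbig
  push_neg at hbig
  apply ha.2
  calc (∏ j, I j ^ a j) ≤ I i ^ a i :=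
        le_trans Ideal.prod_le_inf (Finset.inf_le (Finset.mem_univ i))
    _ ≤ I i ^ k i := Ideal.pow_le_pow_right hbig
    _ ≤ J.frobPow q := hk i

lemma card_step {R : Type u} [CommRing R] {p : ℕ} [Fact p.Prime] [CharP R p]
    (hFP : IsFPure p R) {t : ℕ} (I : Fin t → Ideal R) (J : Ideal R) (e : ℕ)
    (hfe : (VnuPos I (J.frobPow (p ^ e))).Finite)
    (hfe1 : (VnuPos I (J.frobPow (p ^ (e + 1)))).Finite) :
    (VnuPos I (J.frobPow (p ^ e))).ncard * p ^ t ≤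
      (VnuPos I (J.frobPow (p ^ (e + 1)))).ncard := by
  classical
  have hp : 0 < p := (Fact.out : p.Prime).pos
  set s : Finset ((Fin t → ℕ) × (Fin t → ℕ)) :=
    hfe.toFinset ×ˢ Fintype.piFinset (fun _ : Fin t => Finset.range p) with hs
  set g : (Fin t → ℕ) × (Fin t → ℕ) → (Fin t → ℕ) := fun ab i => p * ab.1 i - ab.2 i with hg
  have hmem_s : ∀ ab : (Fin t → ℕ) × (Fin t → ℕ), ab ∈ s ↔
      ab.1 ∈ VnuPos I (J.frobPow (p ^ e)) ∧ ∀ i, ab.2 i < p := by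
    intro ab
    simp [hs, Finset.mem_product, Set.Finite.mem_toFinset, Fintype.mem_piFinset,
      Finset.mem_range]
  have hmaps : ∀ ab ∈ s, g ab ∈ hfe1.toFinset := by
    intro ab hab
    rw [hmem_s] at hab
    rw [Set.Finite.mem_toFinset]
    refine key_step hFP I J e hab.1 ?_ ?_
    · intro i
      have h1 : 0 < ab.1 i := hab.1.1 i
      have h2 : ab.2 i < p := hab.2 i
      have h3 : p ≤ p * ab.1 i := Nat.le_mul_of_pos_right p h1
      show 0 < p * ab.1 i - ab.2 i
      omega
    · intro i
      show p * ab.1 i - ab.2 i ≤ p * ab.1 i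
      omega
  have hinj : Set.InjOn g s := by
    rintro ⟨a, b⟩ hab ⟨a', b'⟩ hab' heq
    rw [Finset.mem_coe, hmem_s] at hab hab'
    have hfacts : ∀ i, a i = a' i ∧ b i = b' i := by
      intro i
      have e1 : p * a i - b i = p * a' i - b' i := congrFun heq i
      have hb : b i < p := hab.2 i
      have hb' : b' i < p := hab'.2 i
      have h3 : p ≤ p * a i := Nat.le_mul_of_pos_right p (hab.1.1 i)
      have h3' : p ≤ p * a' i := Nat.le_mul_of_pos_right p (hab'.1.1 i)
      have e2 : p * a i + b' i = p * a' i + b i := by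
        set X := p * a i
        set Y := p * a' i
        omega
      have e3 : b' i = b i := by
        have := congrArg (· % p) e2
        simpa [Nat.mul_add_mod, Nat.mod_eq_of_lt hb, Nat.mod_eq_of_lt hb'] using this
      have e4 : a i = a' i := by
        have : p * a i = p * a' i := by omega
        exact Nat.eq_of_mul_eq_mul_left hp this
      exact ⟨e4, e3.symm⟩
    have ha : a = a' := funext fun i => (hfacts i).1
    have hb : b = b' := funext fun i => (hfacts i).2
    rw [ha, hb]
  have hcard := Finset.card_le_card_of_injOn g hmaps hinj
  rw [Finset.card_product, Fintype.card_piFinset] at hcard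
  simp only [Finset.card_range, Finset.prod_const, Finset.card_univ, Fintype.card_fin] at hcard
  rw [Set.ncard_eq_toFinset_card _ hfe, Set.ncard_eq_toFinset_card _ hfe1]
  exact hcard

/-- For `R` F-pure, the sequence `e ↦ |Ṽ(p^e)|/p^{et}` is monotone increasing. -/
theorem stmt10 {R : Type u} [CommRing R] [IsNoetherianRing R] (p : ℕ) [Fact p.Prime]
    [CharP R p] (hFP : IsFPure p R) {t : ℕ} (I : Fin t → Ideal R) (J : Ideal R)
    (hrad : ∀ i, I i ≤ J.radical) :
    Monotone (fun e : ℕ => ((VnuPos I (J.frobPow (p ^ e))).ncard : ℝ) / (p : ℝ) ^ (e * t)) := by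
  have hp : 0 < p := (Fact.out : p.Prime).pos
  have hpR : (0 : ℝ) < (p : ℝ) := by exact_mod_cast hp
  apply monotone_nat_of_le_succ
  intro e
  have hfe := vnupos_finite I J hrad (q := p ^ e) (pow_pos hp e)
  have hfe1 := vnupos_finite I J hrad (q := p ^ (e + 1)) (pow_pos hp (e + 1))
  have hcard := card_step hFP I J e hfe hfe1
  have h1 : ((VnuPos I (J.frobPow (p ^ e))).ncard : ℝ) * (p : ℝ) ^ t ≤
      ((VnuPos I (J.frobPow (p ^ (e + 1)))).ncard : ℝ) := by
    exact_mod_cast hcard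
  rw [div_le_div_iff₀ (pow_pos hpR _) (pow_pos hpR _)]
  have hexp : (e + 1) * t = e * t + t := by ring
  calc ((VnuPos I (J.frobPow (p ^ e))).ncard : ℝ) * (p : ℝ) ^ ((e + 1) * t)
      = (((VnuPos I (J.frobPow (p ^ e))).ncard : ℝ) * (p : ℝ) ^ t) * (p : ℝ) ^ (e * t) := by
        rw [hexp, pow_add]; ring
    _ ≤ ((VnuPos I (J.frobPow (p ^ (e + 1)))).ncard : ℝ) * (p : ℝ) ^ (e * t) :=
        mul_le_mul_of_nonneg_right h1 (le_of_lt (pow_pos hpR _))
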